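/- With notation as above, define p^* : ℤ^{V(X)} → ℤ^{V(X̃)} by p^*(v) = c(v) · Σ_{ṽ ∈ p^{-1}(v)} ṽ. Then L_{X̃} ∘ p^* = p^* ∘ L_𝕏, so p^* descends to a homomorphism p^* : Jac(𝕏) → Jac(X̃), and the composition p_* ∘ p^* acts on Jac(𝕏) as multiplication by |G|. -/

import Mathlib

open Finset

/-- Connectivity of a graph presented by half-edges: root map `r` and involution `ι`. -/
def HalfConn {V H : Type*} (r : H → V) (ι : H → H) : Prop :=
  ∀ u v : V, Relation.ReflTransGen (fun a b => ∃ h, r h = a ∧ r (ι h) = b) u v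

/-- A graph (in terms of half-edges) together with an action of a group `G`. -/
structure GraphAct (G V H : Type*) [Group G] [MulAction G V] [MulAction G H] where
  r : H → V
  ι : H → H
  ι_invol : ∀ h, ι (ι h) = h
  smul_r : ∀ (g : G) (h : H), r (g • h) = g • r h
  smul_ι : ∀ (g : G) (h : H), ι (g • h) = g • ι h

variable {G V H : Type*} [Group G] [MulAction G V] [MulAction G H]

/-- Vertices of the quotient graph: orbits of vertices. -/
abbrev GraphAct.qVert (_ : GraphAct G V H) := Quotient (MulAction.orbitRel G V)

/-- Half-edges of the quotient graph: orbits of half-edges. -/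
abbrev GraphAct.qHalf (_ : GraphAct G V H) := Quotient (MulAction.orbitRel G H)

/-- The root map of the quotient graph. -/
def GraphAct.qr (X : GraphAct G V H) : X.qHalf → X.qVert :=
  Quotient.map X.r (by
    intro a b hab
    obtain ⟨g, rfl⟩ := hab
    exact ⟨g, (X.smul_r g b).symm⟩)

/-- The involution of the quotient graph. -/
def GraphAct.qι (X : GraphAct G V H) : X.qHalf → X.qHalf :=
  Quotient.map X.ι (by
    intro a b hab
    obtain ⟨g, rfl⟩ := hab
    exact ⟨g, (X.smul_ι g b).symm⟩)

/-- The vertex weight of the quotient graph of groups: the order of the stabilizer of a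
preimage vertex. -/
noncomputable def GraphAct.cVq (X : GraphAct G V H) (v : X.qVert) : ℕ :=
  Nat.card (MulAction.stabilizer G v.out)

/-- The half-edge weight of the quotient graph of groups: the order of the stabilizer of a
preimage half-edge. -/
noncomputable def GraphAct.cHq (X : GraphAct G V H) (h : X.qHalf) : ℕ :=
  Nat.card (MulAction.stabilizer G h.out)

/-- The (half-edge) Laplacian matrix of a graph. -/
def halfLapMat {V H : Type*} [Fintype H] [DecidableEq V]
    (r : H → V) (ι : H → H) : Matrix V V ℤ :=
  Matrix.of fun u v => ∑ h : H,
    if r h = v then (if r h = u then 1 else 0) - (if r (ι h) = u then 1 else 0) else 0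

/-- The weighted Laplacian matrix of a graph of groups with vertex weights `cV` and
half-edge weights `cH`: firing `v` moves `c(v)/c(h)` chips along each half-edge `h` at
`v` to `r(ι h)`. -/
def halfLapWMat {V H : Type*} [Fintype H] [DecidableEq V]
    (r : H → V) (ι : H → H) (cV : V → ℕ) (cH : H → ℕ) : Matrix V V ℤ :=
  Matrix.of fun u v => ∑ h : H,
    if r h = v then ((cV v / cH h : ℕ) : ℤ) *
      ((if r h = u then 1 else 0) - (if r (ι h) = u then 1 else 0)) else 0

/-- Degree (sum of coefficients) of a divisor, as a linear map. -/
def degHom (V : Type*) [Fintype V] : (V → ℤ) →ₗ[ℤ] ℤ where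
  toFun d := ∑ v, d v
  map_add' x y := Finset.sum_add_distrib
  map_smul' c x := by simp [Finset.mul_sum]

/-- Jacobian: degree-zero divisors modulo the image of (the linear map given by) `M`. -/
abbrev jacOfMat {V : Type*} [Fintype V] (M : Matrix V V ℤ) :=
  LinearMap.ker (degHom V) ⧸
    Submodule.comap (LinearMap.ker (degHom V)).subtype (LinearMap.range M.mulVecLin)

/-- Pushforward of divisors along a map of vertex sets: add up the chips in each fiber. -/
def pushV {V W : Type*} [Fintype V] [DecidableEq W] (p : V → W) (d : V → ℤ) : W → ℤ :=
  fun w => ∑ v ∈ Finset.univ.filter (fun v => p v = w), d v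

/-- Pullback of divisors to the cover: `p^*(D)(x) = c(p(x)) · D(p(x))`, i.e.
`p^*(v) = c(v) · Σ_{x ∈ p⁻¹(v)} x` on generators. -/
def pullV {V W : Type*} (p : V → W) (c : W → ℕ) (D : W → ℤ) : V → ℤ :=
  fun x => (c (p x) : ℤ) * D (p x)


section AuxProof
set_option linter.unusedSectionVars false

open MulAction

variable {G VV HH : Type*} [Group G] [Finite G] [MulAction G VV] [MulAction G HH]
    [Fintype VV] [Fintype HH] [DecidableEq VV]

lemma cardStab_congr {α : Type*} [MulAction G α] {a b : α}
    (h : MulAction.orbitRel G α a b) :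
    Nat.card (MulAction.stabilizer G a) = Nat.card (MulAction.stabilizer G b) :=
  Nat.card_congr (MulAction.stabilizerEquivStabilizerOfOrbitRel h).toEquiv

lemma cVq_mk (X : GraphAct G VV HH) (u : VV) :
    X.cVq (Quotient.mk (MulAction.orbitRel G VV) u) = Nat.card (MulAction.stabilizer G u) :=
  cardStab_congr (Quotient.exact (Quotient.out_eq _))

lemma cHq_mk (X : GraphAct G VV HH) (h : HH) :
    X.cHq (Quotient.mk (MulAction.orbitRel G HH) h) = Nat.card (MulAction.stabilizer G h) :=
  cardStab_congr (Quotient.exact (Quotient.out_eq _))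

lemma qr_mk (X : GraphAct G VV HH) (h : HH) :
    X.qr (Quotient.mk (MulAction.orbitRel G HH) h) = Quotient.mk (MulAction.orbitRel G VV) (X.r h) :=
  rfl

lemma qι_mk (X : GraphAct G VV HH) (h : HH) :
    X.qι (Quotient.mk (MulAction.orbitRel G HH) h) = Quotient.mk (MulAction.orbitRel G HH) (X.ι h) :=
  rfl

lemma stab_le (X : GraphAct G VV HH) (h : HH) :
    MulAction.stabilizer G h ≤ MulAction.stabilizer G (X.r h) := by
  intro g hg
  have h1 : X.r (g • h) = g • X.r h := X.smul_r g h
  rw [MulAction.mem_stabilizer_iff] at hg ⊢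
  rw [hg] at h1
  exact h1.symm

lemma stab_ι (X : GraphAct G VV HH) (h : HH) :
    MulAction.stabilizer G (X.ι h) = MulAction.stabilizer G h := by
  ext g
  simp only [MulAction.mem_stabilizer_iff]
  rw [← X.smul_ι g h]
  constructor
  · intro hh
    have := congrArg X.ι hh
    rwa [X.ι_invol, X.ι_invol] at this
  · exact fun hh => congrArg X.ι hh

lemma cHq_qι (X : GraphAct G VV HH) (k : X.qHalf) : X.cHq (X.qι k) = X.cHq k := by
  induction k using Quotient.inductionOn with
  | h h => rw [qι_mk, cHq_mk, cHq_mk, stab_ι]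

lemma qι_invol (X : GraphAct G VV HH) (k : X.qHalf) : X.qι (X.qι k) = k := by
  induction k using Quotient.inductionOn with
  | h h => rw [qι_mk, qι_mk, X.ι_invol]

lemma cHq_dvd_cVq (X : GraphAct G VV HH) (k : X.qHalf) : X.cHq k ∣ X.cVq (X.qr k) := by
  induction k using Quotient.inductionOn with
  | h h =>
    rw [qr_mk, cHq_mk, cVq_mk]
    exact Subgroup.card_dvd_of_le (stab_le X h)

lemma cHq_pos (X : GraphAct G VV HH) (k : X.qHalf) : 0 < X.cHq k :=
  Nat.card_pos

/-- The key orbit count: the number of half-edges rooted at `u` in the orbit `k`. -/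
lemma count_fiber (X : GraphAct G VV HH) (u : VV) (k : X.qHalf) [DecidableEq X.qHalf] [DecidableEq X.qVert] :
    (univ.filter (fun h : HH => X.r h = u ∧ Quotient.mk (MulAction.orbitRel G HH) h = k)).card
      = if X.qr k = Quotient.mk (MulAction.orbitRel G VV) u
        then X.cVq (Quotient.mk (MulAction.orbitRel G VV) u) / X.cHq k else 0 := by
  classical
  split_ifs with hq
  · -- find a representative rooted at u
    obtain ⟨h1, hr1, hk1⟩ : ∃ h1, X.r h1 = u ∧ Quotient.mk (MulAction.orbitRel G HH) h1 = k := by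
      obtain ⟨h0, rfl⟩ := Quotient.exists_rep k
      rw [qr_mk] at hq
      obtain ⟨g, hg⟩ := Quotient.exact hq
      refine ⟨g⁻¹ • h0, ?_, Quotient.sound ⟨g⁻¹, rfl⟩⟩
      rw [X.smul_r, ← hg, inv_smul_smul]
    set S := MulAction.stabilizer G u with hS
    have hle : ∀ g : G, g • h1 = h1 → g ∈ S := by
      intro g hg
      have h2 : X.r (g • h1) = g • X.r h1 := X.smul_r g h1
      rw [hg, hr1] at h2
      exact h2.symm
    have hset : {h : HH | X.r h = u ∧ Quotient.mk (MulAction.orbitRel G HH) h = k}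
        = MulAction.orbit S h1 := by
      ext h
      constructor
      · rintro ⟨hru, hk⟩
        rw [← hk1] at hk
        obtain ⟨g, hg⟩ := Quotient.exact hk
        have hgS : g ∈ S := by
          have h2 : X.r (g • h1) = g • X.r h1 := X.smul_r g h1
          rw [show g • h1 = h from hg, hru, hr1] at h2
          exact h2.symm
        exact ⟨⟨g, hgS⟩, hg⟩
      · rintro ⟨s, rfl⟩
        refine ⟨?_, ?_⟩
        · show X.r ((s : G) • h1) = u
          rw [X.smul_r, hr1]
          exact s.2
        · rw [← hk1]
          exact Quotient.sound ⟨(s : G), rfl⟩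
    have hcard1 : (univ.filter (fun h : HH => X.r h = u ∧
        Quotient.mk (MulAction.orbitRel G HH) h = k)).card
        = Nat.card (MulAction.orbit S h1) := by
      rw [← Fintype.card_subtype, ← Nat.card_eq_fintype_card]
      exact Nat.card_congr (Equiv.setCongr hset)
    have hstabeq : Nat.card (MulAction.stabilizer S h1) = Nat.card (MulAction.stabilizer G h1) := by
      refine Nat.card_congr ⟨fun x => ⟨(x.1 : G), x.2⟩, fun y => ⟨⟨y.1, hle y.1 y.2⟩, y.2⟩,
        fun x => rfl, fun y => rfl⟩
    have hos : Nat.card S = Nat.card (MulAction.orbit S h1) * Nat.card (MulAction.stabilizer G h1) := by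
      rw [← hstabeq, Nat.card_congr (MulAction.orbitEquivQuotientStabilizer S h1)]
      exact Subgroup.card_eq_card_quotient_mul_card_subgroup _
    have hcV : X.cVq (Quotient.mk (MulAction.orbitRel G VV) u) = Nat.card S := cVq_mk X u
    have hcH : X.cHq k = Nat.card (MulAction.stabilizer G h1) := by
      rw [← hk1, cHq_mk]
    rw [hcard1, hcV, hcH]
    have hpos : 0 < Nat.card (MulAction.stabilizer G h1) := Nat.card_pos
    rw [hos, Nat.mul_div_cancel _ hpos]
  · rw [Finset.card_eq_zero, Finset.filter_eq_empty_iff]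
    rintro h - ⟨hru, hk⟩
    exact hq (by rw [← hk, qr_mk, hru])

/-- Count of a vertex fiber. -/
lemma count_vfiber (X : GraphAct G VV HH) (w : X.qVert) [DecidableEq X.qVert] :
    (univ.filter (fun v : VV => Quotient.mk (MulAction.orbitRel G VV) v = w)).card
        * X.cVq w = Nat.card G := by
  classical
  have hset : {v : VV | Quotient.mk (MulAction.orbitRel G VV) v = w}
      = MulAction.orbit G w.out := by
    ext v
    constructor
    · intro hv
      exact Quotient.exact (hv.trans (Quotient.out_eq w).symm)
    · intro hv
      exact (Quotient.sound hv).trans (Quotient.out_eq w)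
  have hcard1 : (univ.filter (fun v : VV => Quotient.mk (MulAction.orbitRel G VV) v = w)).card
      = Nat.card (MulAction.orbit G w.out) := by
    rw [← Fintype.card_subtype, ← Nat.card_eq_fintype_card]
    exact Nat.card_congr (Equiv.setCongr hset)
  rw [hcard1, GraphAct.cVq, Nat.card_congr (MulAction.orbitEquivQuotientStabilizer G w.out)]
  exact (Subgroup.card_eq_card_quotient_mul_card_subgroup _).symm

lemma mulVec_halfLap (X : GraphAct G VV HH) (f : VV → ℤ) (u : VV) :
    (halfLapMat X.r X.ι).mulVec f u
      = ∑ h ∈ univ.filter (fun h => X.r h = u), (f u - f (X.r (X.ι h))) := by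
  classical
  simp only [Matrix.mulVec, dotProduct, halfLapMat, Matrix.of_apply]
  simp only [Finset.sum_mul]
  rw [Finset.sum_comm]
  have step1 : ∀ h : HH,
      (∑ v : VV, (if X.r h = v then (if X.r h = u then (1:ℤ) else 0)
          - (if X.r (X.ι h) = u then 1 else 0) else 0) * f v)
        = ((if X.r h = u then (1:ℤ) else 0) - (if X.r (X.ι h) = u then 1 else 0)) * f (X.r h) := by
    intro h
    rw [Finset.sum_eq_single (X.r h)]
    · simp
    · intro v _ hv; simp [Ne.symm hv]
    · simp
  rw [Finset.sum_congr rfl (fun h _ => step1 h)]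
  have split : ∀ h : HH, ((if X.r h = u then (1:ℤ) else 0)
        - (if X.r (X.ι h) = u then 1 else 0)) * f (X.r h)
      = (if X.r h = u then f (X.r h) else 0) - (if X.r (X.ι h) = u then f (X.r h) else 0) := by
    intro h; split_ifs <;> ring
  rw [Finset.sum_congr rfl (fun h _ => split h), Finset.sum_sub_distrib]
  have reidx : ∑ h : HH, (if X.r (X.ι h) = u then f (X.r h) else 0)
      = ∑ h : HH, (if X.r h = u then f (X.r (X.ι h)) else 0) := by
    exact Fintype.sum_equiv ⟨X.ι, X.ι, X.ι_invol, X.ι_invol⟩ _ _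
      (fun h => by simp only [Equiv.coe_fn_mk, X.ι_invol])
  rw [reidx, ← Finset.sum_sub_distrib, Finset.sum_filter]
  apply Finset.sum_congr rfl
  intro h _
  split_ifs with hh
  · rw [hh]
  · ring

lemma mulVec_halfLapW (X : GraphAct G VV HH) [Fintype X.qHalf] [Fintype X.qVert] [DecidableEq X.qVert]
    (D : X.qVert → ℤ) (w : X.qVert) :
    (halfLapWMat X.qr X.qι X.cVq X.cHq).mulVec D w
      = ∑ k ∈ univ.filter (fun k => X.qr k = w),
          (((X.cVq w / X.cHq k : ℕ) : ℤ) * D w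
            - ((X.cVq (X.qr (X.qι k)) / X.cHq k : ℕ) : ℤ) * D (X.qr (X.qι k))) := by
  classical
  simp only [Matrix.mulVec, dotProduct, halfLapWMat, Matrix.of_apply]
  simp only [Finset.sum_mul]
  rw [Finset.sum_comm]
  have step1 : ∀ k : X.qHalf,
      (∑ v : X.qVert, (if X.qr k = v then ((X.cVq v / X.cHq k : ℕ) : ℤ) *
          ((if X.qr k = w then (1:ℤ) else 0) - (if X.qr (X.qι k) = w then 1 else 0)) else 0) * D v)
        = ((X.cVq (X.qr k) / X.cHq k : ℕ) : ℤ) *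
          ((if X.qr k = w then (1:ℤ) else 0) - (if X.qr (X.qι k) = w then 1 else 0)) * D (X.qr k) := by
    intro k
    rw [Finset.sum_eq_single (X.qr k)]
    · simp
    · intro v _ hv; simp [Ne.symm hv]
    · simp
  rw [Finset.sum_congr rfl (fun k _ => step1 k)]
  have split : ∀ k : X.qHalf, ((X.cVq (X.qr k) / X.cHq k : ℕ) : ℤ) *
        ((if X.qr k = w then (1:ℤ) else 0) - (if X.qr (X.qι k) = w then 1 else 0)) * D (X.qr k)
      = (if X.qr k = w then ((X.cVq (X.qr k) / X.cHq k : ℕ) : ℤ) * D (X.qr k) else 0)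
        - (if X.qr (X.qι k) = w then ((X.cVq (X.qr k) / X.cHq k : ℕ) : ℤ) * D (X.qr k) else 0) := by
    intro k; split_ifs <;> ring
  rw [Finset.sum_congr rfl (fun k _ => split k), Finset.sum_sub_distrib]
  have reidx : ∑ k : X.qHalf, (if X.qr (X.qι k) = w
          then ((X.cVq (X.qr k) / X.cHq k : ℕ) : ℤ) * D (X.qr k) else 0)
      = ∑ k : X.qHalf, (if X.qr k = w
          then ((X.cVq (X.qr (X.qι k)) / X.cHq k : ℕ) : ℤ) * D (X.qr (X.qι k)) else 0) := by
    exact Fintype.sum_equiv ⟨X.qι, X.qι, qι_invol X, qι_invol X⟩ _ _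
      (fun k => by simp only [Equiv.coe_fn_mk, qι_invol, cHq_qι])
  rw [reidx, ← Finset.sum_sub_distrib, Finset.sum_filter]
  apply Finset.sum_congr rfl
  intro k _
  split_ifs with hh
  · rw [hh]
  · ring

lemma key_lap (X : GraphAct G VV HH) [Fintype X.qHalf] [Fintype X.qVert] [DecidableEq X.qVert]
    (D : X.qVert → ℤ) :
    (halfLapMat X.r X.ι).mulVec (pullV (Quotient.mk (MulAction.orbitRel G VV)) X.cVq D) =
      pullV (Quotient.mk (MulAction.orbitRel G VV)) X.cVq
        ((halfLapWMat X.qr X.qι X.cVq X.cHq).mulVec D) := by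
  classical
  funext u
  set w := Quotient.mk (MulAction.orbitRel G VV) u with hw
  set F : X.qHalf → ℤ := fun k => (X.cVq w : ℤ) * D w
      - (X.cVq (X.qr (X.qι k)) : ℤ) * D (X.qr (X.qι k)) with hF
  rw [mulVec_halfLap]
  show _ = (X.cVq w : ℤ) * (halfLapWMat X.qr X.qι X.cVq X.cHq).mulVec D w
  rw [mulVec_halfLapW]
  have hterm : ∀ h : HH, pullV (Quotient.mk (MulAction.orbitRel G VV)) X.cVq D u
      - pullV (Quotient.mk (MulAction.orbitRel G VV)) X.cVq D (X.r (X.ι h))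
      = F (Quotient.mk (MulAction.orbitRel G HH) h) := fun h => rfl
  rw [Finset.sum_congr rfl (fun h _ => hterm h)]
  -- group the left sum by orbit
  have fib : (∑ h ∈ univ.filter (fun h => X.r h = u), F (Quotient.mk (MulAction.orbitRel G HH) h))
      = ∑ k : X.qHalf, ((univ.filter (fun h : HH => X.r h = u ∧
            Quotient.mk (MulAction.orbitRel G HH) h = k)).card : ℤ) * F k := by
    rw [← Finset.sum_fiberwise' (univ.filter (fun h => X.r h = u))
        (fun h => Quotient.mk (MulAction.orbitRel G HH) h) F]
    apply Finset.sum_congr rfl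
    intro k _
    rw [Finset.sum_const, Finset.filter_filter, nsmul_eq_mul]
  rw [fib]
  rw [Finset.mul_sum, Finset.sum_filter]
  apply Finset.sum_congr rfl
  intro k _
  rw [count_fiber X u k, ← hw]
  split_ifs with hk
  · -- divisibility arithmetic
    obtain ⟨m, hm⟩ : X.cHq k ∣ X.cVq w := hk ▸ cHq_dvd_cVq X k
    obtain ⟨n, hn⟩ : X.cHq k ∣ X.cVq (X.qr (X.qι k)) := by
      have := cHq_dvd_cVq X (X.qι k)
      rwa [cHq_qι] at this
    have hc : X.cHq k ≠ 0 := (cHq_pos X k).ne'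
    rw [hF, hm, hn, Nat.mul_div_cancel_left _ (Nat.pos_of_ne_zero hc),
      Nat.mul_div_cancel_left _ (Nat.pos_of_ne_zero hc)]
    push_cast [hm, hn]
    ring
  · simp

lemma push_pull (X : GraphAct G VV HH) [Fintype X.qVert] [DecidableEq X.qVert]
    (D : X.qVert → ℤ) :
    pushV (Quotient.mk (MulAction.orbitRel G VV))
        (pullV (Quotient.mk (MulAction.orbitRel G VV)) X.cVq D) =
      (Nat.card G : ℤ) • D := by
  classical
  funext w
  rw [pushV]
  have hterm : ∀ v ∈ univ.filter (fun v : VV => Quotient.mk (MulAction.orbitRel G VV) v = w),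
      pullV (Quotient.mk (MulAction.orbitRel G VV)) X.cVq D v = (X.cVq w : ℤ) * D w := by
    intro v hv
    have hvw : Quotient.mk (MulAction.orbitRel G VV) v = w := (Finset.mem_filter.mp hv).2
    rw [pullV, hvw]
  rw [Finset.sum_congr rfl hterm, Finset.sum_const, nsmul_eq_mul]
  have := count_vfiber X w
  show (_ : ℤ) * _ = (Nat.card G : ℤ) * D w
  rw [← mul_assoc, ← Nat.cast_mul, this]

end AuxProof

/-- the pullback `p^*` along the quotient map `p : X̃ → X̃/G` satisfies
`L_{X̃} ∘ p^* = p^* ∘ L_𝕏`, descends to a homomorphism `Jac(𝕏) → Jac(X̃)`, and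
`p_* ∘ p^*` is multiplication by `|G|`. -/
theorem stmt7 {G VV HH : Type*} [Group G] [Finite G] [MulAction G VV] [MulAction G HH]
    [Fintype VV] [Fintype HH] [DecidableEq VV]
    (X : GraphAct G VV HH)
    [Fintype X.qVert] [Fintype X.qHalf] [DecidableEq X.qVert]
    (hconn : HalfConn X.r X.ι) :
    (∀ D : X.qVert → ℤ,
        (halfLapMat X.r X.ι).mulVec (pullV (Quotient.mk (MulAction.orbitRel G VV)) X.cVq D) =
          pullV (Quotient.mk (MulAction.orbitRel G VV)) X.cVq
            ((halfLapWMat X.qr X.qι X.cVq X.cHq).mulVec D)) ∧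
    (∃ ψ : jacOfMat (halfLapWMat X.qr X.qι X.cVq X.cHq) →+ jacOfMat (halfLapMat X.r X.ι),
      ∀ (x : LinearMap.ker (degHom X.qVert)) (y : LinearMap.ker (degHom VV)),
        pullV (Quotient.mk (MulAction.orbitRel G VV)) X.cVq (x : X.qVert → ℤ) = (y : VV → ℤ) →
          ψ (Submodule.Quotient.mk x) = Submodule.Quotient.mk y) ∧
    (∀ D : X.qVert → ℤ,
        pushV (Quotient.mk (MulAction.orbitRel G VV))
            (pullV (Quotient.mk (MulAction.orbitRel G VV)) X.cVq D) =
          (Nat.card G : ℤ) • D) := by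
  classical
  refine ⟨key_lap X, ?_, push_pull X⟩
  let P : (X.qVert → ℤ) →ₗ[ℤ] (VV → ℤ) :=
    { toFun := pullV (Quotient.mk (MulAction.orbitRel G VV)) X.cVq
      map_add' := fun x y => by funext v; simp [pullV, mul_add]
      map_smul' := fun c x => by funext v; simp [pullV]; ring }
  have hdeg : ∀ D : X.qVert → ℤ, degHom VV (P D) = (Nat.card G : ℤ) * degHom X.qVert D := by
    intro D
    have h1 : degHom VV (P D)
        = ∑ w : X.qVert, pushV (Quotient.mk (MulAction.orbitRel G VV)) (P D) w :=
      (Finset.sum_fiberwise univ (fun v => Quotient.mk (MulAction.orbitRel G VV) v) (P D)).symm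
    have h2 : pushV (Quotient.mk (MulAction.orbitRel G VV)) (P D) = (Nat.card G : ℤ) • D :=
      push_pull X D
    rw [h1, h2]
    simp [degHom, Finset.mul_sum]
  have hker : ∀ x : X.qVert → ℤ, x ∈ LinearMap.ker (degHom X.qVert)
      → P x ∈ LinearMap.ker (degHom VV) := by
    intro x hx
    rw [LinearMap.mem_ker] at hx ⊢
    rw [hdeg, hx, mul_zero]
  let f : LinearMap.ker (degHom X.qVert) →ₗ[ℤ] LinearMap.ker (degHom VV) := P.restrict hker
  have hle : Submodule.comap (LinearMap.ker (degHom X.qVert)).subtype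
        (LinearMap.range (halfLapWMat X.qr X.qι X.cVq X.cHq).mulVecLin)
      ≤ Submodule.comap f (Submodule.comap (LinearMap.ker (degHom VV)).subtype
        (LinearMap.range (halfLapMat X.r X.ι).mulVecLin)) := by
    rintro x hx
    simp only [Submodule.mem_comap, LinearMap.mem_range, Submodule.coe_subtype] at hx ⊢
    obtain ⟨D, hD⟩ := hx
    refine ⟨P D, ?_⟩
    rw [Matrix.mulVecLin_apply]
    show (halfLapMat X.r X.ι).mulVec (pullV (Quotient.mk (MulAction.orbitRel G VV)) X.cVq D)
      = ((f x : LinearMap.ker (degHom VV)) : VV → ℤ)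
    rw [key_lap X D]
    show P ((halfLapWMat X.qr X.qι X.cVq X.cHq).mulVec D) = _
    rw [← Matrix.mulVecLin_apply, hD]
    rfl
  refine ⟨(Submodule.mapQ _ _ f hle).toAddMonoidHom, ?_⟩
  intro x y hxy
  have hfx : f x = y := Subtype.ext hxy
  show Submodule.mapQ _ _ f hle (Submodule.Quotient.mk x) = _
  rw [Submodule.mapQ_apply, hfx]
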